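/- Let f : (0, r₀) → ℝ be a differentiable function satisfying 4f(t)² + f'(t) ≤ -λ for all t and lim_{t→0⁺} t·f(t) = 1/4. Then f(t) ≤ ½·ct_λ(2t) for all t in (0, r₀), where ct_λ(s) = √λ cot(√λ s) for λ > 0, = 1/s for λ = 0, and = √(-λ) coth(√(-λ) s) for λ < 0. (Here -λ on the right side of the Riccati inequality corresponds to the assumption H ≥ 4λ via 4f² + f' ≤ -¼H(T_o) ≤ -λ.) -/

import Mathlib

/-- The generalized cotangent `ct_λ`: `√λ cot(√λ s)` for `λ > 0`, `1/s` for `λ = 0`,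
and `√(-λ) coth(√(-λ) s)` for `λ < 0`. -/
noncomputable def ctGen (lam s : ℝ) : ℝ :=
  if 0 < lam then Real.sqrt lam * Real.cos (Real.sqrt lam * s) / Real.sin (Real.sqrt lam * s)
  else if lam = 0 then 1 / s
  else Real.sqrt (-lam) * Real.cosh (Real.sqrt (-lam) * s) / Real.sinh (Real.sqrt (-lam) * s)

open Set Filter Topology

open Set Filter Topology

private lemma riccati_aux (lam b : ℝ) (f g u : ℝ → ℝ) (hb : 0 < b)
    (hfd : ∀ t ∈ Set.Ioo (0:ℝ) b, DifferentiableAt ℝ f t)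
    (hric : ∀ t ∈ Set.Ioo (0:ℝ) b, 4 * (f t)^2 + deriv f t ≤ -lam)
    (hud : ∀ t, DifferentiableAt ℝ u t)
    (hgd : ∀ t ∈ Set.Ioo (0:ℝ) b, DifferentiableAt ℝ g t)
    (hupos : ∀ t ∈ Set.Ioo (0:ℝ) b, 0 < u t)
    (hgu : ∀ t ∈ Set.Ioo (0:ℝ) b, deriv u t = 4 * g t * u t)
    (hgric : ∀ t ∈ Set.Ioo (0:ℝ) b, deriv g t = -lam - 4 * (g t)^2)
    (hw0 : Filter.Tendsto (fun t => u t ^ 2 * (f t - g t)) (nhdsWithin 0 (Set.Ioi 0)) (nhds 0)) :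
    ∀ t ∈ Set.Ioo (0:ℝ) b, f t ≤ g t := by
  set w : ℝ → ℝ := fun t => u t ^ 2 * (f t - g t) with hw
  have hwd : ∀ t ∈ Set.Ioo (0:ℝ) b, deriv w t ≤ 0 := by
    intro t ht
    have hfd' := (hfd t ht).hasDerivAt
    have hgd' := (hgd t ht).hasDerivAt
    have hud' := (hud t).hasDerivAt
    have hwder : HasDerivAt w
        ((2 * u t ^ 1 * deriv u t) * (f t - g t) + u t ^ 2 * (deriv f t - deriv g t)) t := by
      exact (hud'.pow 2).mul (hfd'.sub hgd')
    have hdw := hwder.deriv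
    rw [hdw, hgu t ht, hgric t ht]
    have h1 := hric t ht
    nlinarith [sq_nonneg (u t * (f t - g t)), sq_nonneg (u t), sq_nonneg (f t - g t),
      mul_pos (hupos t ht) (hupos t ht), sq_nonneg (u t * (f t + g t))]
  have hwc : ContinuousOn w (Set.Ioo 0 b) := by
    intro t ht
    exact (((hud t).pow 2).mul ((hfd t ht).sub (hgd t ht))).continuousAt.continuousWithinAt
  have hanti : AntitoneOn w (Set.Ioo 0 b) := by
    apply antitoneOn_of_deriv_nonpos (convex_Ioo 0 b) hwc
    · intro t ht
      rw [interior_Ioo] at ht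
      exact (((hud t).pow 2).mul ((hfd t ht).sub (hgd t ht))).differentiableWithinAt
    · intro t ht
      rw [interior_Ioo] at ht
      exact hwd t ht
  intro t ht
  have hwt : w t ≤ 0 := by
    have hev : ∀ᶠ a in nhdsWithin 0 (Set.Ioi 0), w t ≤ w a := by
      have : Set.Ioo (0:ℝ) t ∈ nhdsWithin (0:ℝ) (Set.Ioi 0) := by
        apply Ioo_mem_nhdsGT_of_mem
        exact ⟨le_refl _, ht.1⟩
      filter_upwards [this] with a ha
      exact hanti ⟨ha.1, ha.2.trans ht.2⟩ ht (le_of_lt ha.2)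
    exact ge_of_tendsto hw0 hev
  have hu2 : 0 < u t ^ 2 := pow_pos (hupos t ht) 2
  have hwt' : u t ^ 2 * (f t - g t) ≤ 0 := hwt
  nlinarith [hwt', hu2]



private lemma sq_slope_limit (u : ℝ → ℝ) (hud : DifferentiableAt ℝ u 0) (h0 : u 0 = 0) :
    Tendsto (fun t => u t ^ 2 / t) (nhdsWithin 0 (Set.Ioi 0)) (nhds 0) := by
  have h : HasDerivAt (fun t => u t ^ 2) (2 * u 0 ^ 1 * deriv u 0) 0 := hud.hasDerivAt.pow 2
  rw [h0] at h
  simp only [pow_one, mul_zero, zero_mul] at h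
  have := hasDerivAt_iff_tendsto_slope.mp h
  have h2 : Tendsto (slope (fun t => u t ^ 2) 0) (nhdsWithin 0 (Set.Ioi 0)) (nhds 0) :=
    this.mono_left (nhdsWithin_mono 0 (fun x hx => ne_of_gt hx))
  apply h2.congr
  intro x
  simp [slope_def_field, h0, div_eq_iff, mul_comm]

private lemma w_limit (f u g : ℝ → ℝ)
    (hA : Tendsto (fun t => u t ^ 2 / t) (nhdsWithin 0 (Set.Ioi 0)) (nhds 0))
    (hB : Tendsto (fun t => u t ^ 2 * g t) (nhdsWithin 0 (Set.Ioi 0)) (nhds 0))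
    (hasymp : Tendsto (fun t => t * f t) (nhdsWithin 0 (Set.Ioi 0)) (nhds (1 / 4))) :
    Tendsto (fun t => u t ^ 2 * (f t - g t)) (nhdsWithin 0 (Set.Ioi 0)) (nhds 0) := by
  have h1 : Tendsto (fun t => (u t ^ 2 / t) * (t * f t) - u t ^ 2 * g t)
      (nhdsWithin 0 (Set.Ioi 0)) (nhds 0) := by
    have := (hA.mul hasymp).sub hB
    simpa using this
  apply h1.congr'
  filter_upwards [self_mem_nhdsWithin] with t (ht : (0:ℝ) < t)
  field_simp

private lemma case_zero (r₀ : ℝ) (hr₀ : 0 < r₀) (f : ℝ → ℝ)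
    (hdiff : ∀ t ∈ Set.Ioo (0 : ℝ) r₀, DifferentiableAt ℝ f t)
    (hriccati : ∀ t ∈ Set.Ioo (0 : ℝ) r₀, 4 * (f t) ^ 2 + deriv f t ≤ -(0:ℝ))
    (hasymp : Filter.Tendsto (fun t => t * f t) (nhdsWithin 0 (Set.Ioi 0)) (nhds (1 / 4))) :
    ∀ t ∈ Set.Ioo (0 : ℝ) r₀, f t ≤ (1 / 2) * ctGen 0 (2 * t) := by
  set g : ℝ → ℝ := fun t => 1 / (4 * t) with hg
  set u : ℝ → ℝ := fun t => t with hu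
  have hgd : ∀ t ∈ Set.Ioo (0:ℝ) r₀, DifferentiableAt ℝ g t := by
    intro t ht
    apply DifferentiableAt.div (differentiableAt_const _)
    · exact (differentiableAt_fun_id.const_mul _)
    · have := ht.1; positivity
  have hgder : ∀ t ∈ Set.Ioo (0:ℝ) r₀, HasDerivAt g (-(4) / (4*t)^2) t := by
    intro t ht
    have ht1 := ht.1
    have h4t : (4:ℝ) * t ≠ 0 := by positivity
    have : HasDerivAt (fun t : ℝ => ((4:ℝ) * t)⁻¹) (-(4*1) / (4*t)^2) t :=
      ((hasDerivAt_id t).const_mul 4).inv h4t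
    simpa [hg, one_div] using this
  have key : ∀ t ∈ Set.Ioo (0:ℝ) r₀, f t ≤ g t := by
    apply riccati_aux 0 r₀ f g u hr₀ hdiff hriccati (fun t => differentiableAt_fun_id) hgd
    · intro t ht; exact ht.1
    · intro t ht
      have : deriv u t = 1 := by simp [hu]
      rw [this, hg]
      have : t ≠ 0 := ne_of_gt ht.1
      field_simp
      rfl
    · intro t ht
      rw [(hgder t ht).deriv, hg]
      have ht1 := ht.1
      have h4t : (4:ℝ) * t ≠ 0 := by positivity
      field_simp
      ring
    · apply w_limit f u g
      · exact sq_slope_limit u differentiableAt_fun_id rfl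
      · have h1 : Tendsto (fun t : ℝ => t / 4) (nhdsWithin 0 (Set.Ioi 0)) (nhds 0) := by
          have : Tendsto (fun t : ℝ => t / 4) (nhds 0) (nhds 0) := by
            simpa using (continuous_id.div_const (4:ℝ)).tendsto 0
          exact this.mono_left nhdsWithin_le_nhds
        apply h1.congr'
        filter_upwards [self_mem_nhdsWithin] with t (ht : (0:ℝ) < t)
        have : t ≠ 0 := ne_of_gt ht
        simp only [hu, hg]
        field_simp
      · exact hasymp
  intro t ht
  have := key t ht
  have ht0 : t ≠ 0 := ne_of_gt ht.1
  simp only [ctGen, if_neg (lt_irrefl (0:ℝ)), if_pos rfl]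
  calc f t ≤ g t := this
  _ = (1/2) * (1 / (2 * t)) := by rw [hg]; field_simp; ring

private lemma case_neg (lam r₀ : ℝ) (hlam : lam < 0) (hr₀ : 0 < r₀) (f : ℝ → ℝ)
    (hdiff : ∀ t ∈ Set.Ioo (0 : ℝ) r₀, DifferentiableAt ℝ f t)
    (hriccati : ∀ t ∈ Set.Ioo (0 : ℝ) r₀, 4 * (f t) ^ 2 + deriv f t ≤ -lam)
    (hasymp : Filter.Tendsto (fun t => t * f t) (nhdsWithin 0 (Set.Ioi 0)) (nhds (1 / 4))) :
    ∀ t ∈ Set.Ioo (0 : ℝ) r₀, f t ≤ (1 / 2) * ctGen lam (2 * t) := by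
  set c : ℝ := Real.sqrt (-lam) with hcdef
  have hc : 0 < c := Real.sqrt_pos.mpr (by linarith)
  have hc2 : c ^ 2 = -lam := Real.sq_sqrt (by linarith)
  set u : ℝ → ℝ := fun t => Real.sinh (c * (2 * t)) with hu
  set g : ℝ → ℝ := fun t => (1/2) * (c * Real.cosh (c * (2 * t)) / Real.sinh (c * (2 * t)))
    with hg
  have hm : ∀ t : ℝ, HasDerivAt (fun s : ℝ => c * (2 * s)) (c * 2) t := by
    intro t
    simpa using ((hasDerivAt_id t).const_mul (2:ℝ)).const_mul c
  have hud' : ∀ t : ℝ, HasDerivAt u (Real.cosh (c * (2 * t)) * (c * 2)) t := by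
    intro t
    exact (Real.hasDerivAt_sinh (c * (2 * t))).comp t (hm t)
  have hsinh_pos : ∀ t ∈ Set.Ioo (0:ℝ) r₀, 0 < Real.sinh (c * (2 * t)) := by
    intro t ht
    have := ht.1
    exact Real.sinh_pos_iff.mpr (by positivity)
  have hgder : ∀ t ∈ Set.Ioo (0:ℝ) r₀, HasDerivAt g
      ((1/2) * ((c * (Real.sinh (c * (2 * t)) * (c * 2)) * Real.sinh (c * (2 * t))
        - c * Real.cosh (c * (2 * t)) * (Real.cosh (c * (2 * t)) * (c * 2)))
        / Real.sinh (c * (2 * t)) ^ 2)) t := by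
    intro t ht
    have hN : HasDerivAt (fun s => c * Real.cosh (c * (2 * s)))
        (c * (Real.sinh (c * (2 * t)) * (c * 2))) t :=
      by have h := (Real.hasDerivAt_cosh (c * (2 * t))).comp t (hm t); exact h.const_mul c
    have hD := hud' t
    have hDne : Real.sinh (c * (2 * t)) ≠ 0 := ne_of_gt (hsinh_pos t ht)
    exact (hN.div hD hDne).const_mul (1/2)
  have key : ∀ t ∈ Set.Ioo (0:ℝ) r₀, f t ≤ g t := by
    apply riccati_aux lam r₀ f g u hr₀ hdiff hriccati
      (fun t => (hud' t).differentiableAt)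
    · intro t ht; exact (hgder t ht).differentiableAt
    · intro t ht; exact hsinh_pos t ht
    · intro t ht
      rw [(hud' t).deriv]
      have hDne : Real.sinh (c * (2 * t)) ≠ 0 := ne_of_gt (hsinh_pos t ht)
      simp only [hg, hu]
      field_simp
      rw [mul_div_assoc, div_self (by rwa [← mul_assoc] at hDne)]; norm_num
    · intro t ht
      rw [(hgder t ht).deriv]
      have hDne : Real.sinh (c * (2 * t)) ≠ 0 := ne_of_gt (hsinh_pos t ht)
      have hid := Real.cosh_sq_sub_sinh_sq (c * (2 * t))
      have hlameq : lam = -c^2 := by linarith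
      simp only [hg]
      rw [hlameq]
      field_simp
      rw [mul_sub, sub_div, mul_div_assoc, div_self (pow_ne_zero 2 (by rwa [show (2:ℝ) * c * t = c * (2 * t) by ring]))]; ring
    · apply w_limit f u g
      · apply sq_slope_limit u (hud' 0).differentiableAt
        simp [hu]
      · have hcont : Tendsto (fun t : ℝ => (1/2) * (c * Real.sinh (c * (2 * t))
            * Real.cosh (c * (2 * t)))) (nhdsWithin 0 (Set.Ioi 0)) (nhds 0) := by
          have h0 : Tendsto (fun t : ℝ => (1/2) * (c * Real.sinh (c * (2 * t))
              * Real.cosh (c * (2 * t)))) (nhds 0) (nhds ((1/2) * (c * Real.sinh (c * (2 * 0))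
              * Real.cosh (c * (2 * 0))))) := by
            apply Continuous.tendsto
            have hmc : Continuous (fun t : ℝ => c * (2 * t)) :=
              continuous_const.mul (continuous_const.mul continuous_id)
            exact continuous_const.mul ((continuous_const.mul
              (Real.continuous_sinh.comp hmc)).mul (Real.continuous_cosh.comp hmc))
          simpa using h0.mono_left nhdsWithin_le_nhds
        apply hcont.congr'
        filter_upwards [self_mem_nhdsWithin] with t (ht : (0:ℝ) < t)
        have hDne : Real.sinh (c * (2 * t)) ≠ 0 :=
          ne_of_gt (Real.sinh_pos_iff.mpr (by positivity))
        simp only [hu, hg]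
        field_simp
      · exact hasymp
  intro t ht
  have hres := key t ht
  simp only [ctGen, if_neg (not_lt.mpr hlam.le), if_neg (ne_of_lt hlam)]
  exact hres

private lemma case_pos (lam r₀ : ℝ) (hlam : 0 < lam) (hr₀ : 0 < r₀) (f : ℝ → ℝ)
    (hdiff : ∀ t ∈ Set.Ioo (0 : ℝ) r₀, DifferentiableAt ℝ f t)
    (hriccati : ∀ t ∈ Set.Ioo (0 : ℝ) r₀, 4 * (f t) ^ 2 + deriv f t ≤ -lam)
    (hasymp : Filter.Tendsto (fun t => t * f t) (nhdsWithin 0 (Set.Ioi 0)) (nhds (1 / 4))) :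
    ∀ t ∈ Set.Ioo (0 : ℝ) r₀, f t ≤ (1 / 2) * ctGen lam (2 * t) := by
  set c : ℝ := Real.sqrt lam with hcdef
  have hc : 0 < c := Real.sqrt_pos.mpr hlam
  have hc2 : c ^ 2 = lam := Real.sq_sqrt hlam.le
  set T : ℝ := Real.pi / (2 * c) with hT
  have hTpos : 0 < T := by positivity
  have hcT : c * (2 * T) = Real.pi := by rw [hT]; field_simp
  set b : ℝ := min r₀ T with hb
  have hbpos : 0 < b := lt_min hr₀ hTpos
  set u : ℝ → ℝ := fun t => Real.sin (c * (2 * t)) with hu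
  set g : ℝ → ℝ := fun t => (1/2) * (c * Real.cos (c * (2 * t)) / Real.sin (c * (2 * t)))
    with hg
  have hm : ∀ t : ℝ, HasDerivAt (fun s : ℝ => c * (2 * s)) (c * 2) t := by
    intro t
    simpa using ((hasDerivAt_id t).const_mul (2:ℝ)).const_mul c
  have hud' : ∀ t : ℝ, HasDerivAt u (Real.cos (c * (2 * t)) * (c * 2)) t := by
    intro t
    exact (Real.hasDerivAt_sin (c * (2 * t))).comp t (hm t)
  have hsin_posT : ∀ t ∈ Set.Ioo (0:ℝ) T, 0 < Real.sin (c * (2 * t)) := by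
    intro t ht
    apply Real.sin_pos_of_pos_of_lt_pi
    · have := ht.1; positivity
    · rw [← hcT]
      have := ht.2
      nlinarith
  have hsin_pos : ∀ t ∈ Set.Ioo (0:ℝ) b, 0 < Real.sin (c * (2 * t)) := by
    intro t ht
    exact hsin_posT t ⟨ht.1, lt_of_lt_of_le ht.2 (min_le_right _ _)⟩
  have hgder : ∀ t : ℝ, Real.sin (c * (2 * t)) ≠ 0 → HasDerivAt g
      ((1/2) * ((c * (-Real.sin (c * (2 * t)) * (c * 2)) * Real.sin (c * (2 * t))
        - c * Real.cos (c * (2 * t)) * (Real.cos (c * (2 * t)) * (c * 2)))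
        / Real.sin (c * (2 * t)) ^ 2)) t := by
    intro t hDne
    have hN : HasDerivAt (fun s => c * Real.cos (c * (2 * s)))
        (c * (-Real.sin (c * (2 * t)) * (c * 2))) t :=
      by have h := (Real.hasDerivAt_cos (c * (2 * t))).comp t (hm t); exact h.const_mul c
    exact ((hN.div (hud' t) hDne)).const_mul (1/2)
  have key : ∀ t ∈ Set.Ioo (0:ℝ) b, f t ≤ g t := by
    apply riccati_aux lam b f g u hbpos
      (fun t ht => hdiff t ⟨ht.1, lt_of_lt_of_le ht.2 (min_le_left _ _)⟩)
      (fun t ht => hriccati t ⟨ht.1, lt_of_lt_of_le ht.2 (min_le_left _ _)⟩)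
      (fun t => (hud' t).differentiableAt)
    · intro t ht; exact (hgder t (ne_of_gt (hsin_pos t ht))).differentiableAt
    · exact hsin_pos
    · intro t ht
      rw [(hud' t).deriv]
      have hDne : Real.sin (c * (2 * t)) ≠ 0 := ne_of_gt (hsin_pos t ht)
      simp only [hg, hu]
      field_simp
      rw [mul_div_assoc, div_self (by rwa [← mul_assoc] at hDne)]; ring
    · intro t ht
      have hDne : Real.sin (c * (2 * t)) ≠ 0 := ne_of_gt (hsin_pos t ht)
      rw [(hgder t hDne).deriv]
      have hid := Real.sin_sq_add_cos_sq (c * (2 * t))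
      have hlameq : lam = c^2 := hc2.symm
      simp only [hg]
      rw [hlameq]
      field_simp
      rw [mul_sub, sub_div, mul_neg, neg_div, mul_div_assoc, div_self (pow_ne_zero 2 (by rwa [show (2:ℝ) * c * t = c * (2 * t) by ring]))]; ring
    · apply w_limit f u g
      · apply sq_slope_limit u (hud' 0).differentiableAt
        simp [hu]
      · have hmc : Continuous (fun t : ℝ => c * (2 * t)) :=
          continuous_const.mul (continuous_const.mul continuous_id)
        have hcont : Tendsto (fun t : ℝ => (1/2) * (c * Real.sin (c * (2 * t))
            * Real.cos (c * (2 * t)))) (nhdsWithin 0 (Set.Ioi 0)) (nhds 0) := by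
          have h0 : Continuous (fun t : ℝ => (1/2) * (c * Real.sin (c * (2 * t))
              * Real.cos (c * (2 * t)))) := continuous_const.mul ((continuous_const.mul
            (Real.continuous_sin.comp hmc)).mul (Real.continuous_cos.comp hmc))
          simpa using (h0.tendsto 0).mono_left nhdsWithin_le_nhds
        apply hcont.congr'
        filter_upwards [Ioo_mem_nhdsGT_of_mem (by constructor <;> [rfl; exact hbpos] :
          (0:ℝ) ∈ Set.Ico 0 b)] with t ht
        have hDne : Real.sin (c * (2 * t)) ≠ 0 := ne_of_gt (hsin_pos t ht)
        simp only [hu, hg]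
        field_simp
      · exact hasymp
  intro t ht
  have hctgen : (1/2 : ℝ) * ctGen lam (2 * t) = g t := by
    simp only [ctGen, if_pos hlam, hg, ← hcdef]
  rw [hctgen]
  by_cases htT : t < T
  · exact key t ⟨ht.1, lt_min ht.2 htT⟩
  push_neg at htT
  exfalso
  have hTr : T < r₀ := lt_of_le_of_lt htT ht.2
  have hbT : b = T := min_eq_right hTr.le
  have hcontf : ContinuousAt f T := (hdiff T ⟨hTpos, hTr⟩).continuousAt
  -- g tends to -infinity as a → T from the left
  have hsinT : Tendsto (fun a => Real.sin (c * (2 * a))) (nhdsWithin T (Set.Iio T))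
      (nhdsWithin 0 (Set.Ioi 0)) := by
    apply tendsto_nhdsWithin_of_tendsto_nhds_of_eventually_within
    · have hmc : Continuous (fun a : ℝ => c * (2 * a)) :=
        continuous_const.mul (continuous_const.mul continuous_id)
      have := ((Real.continuous_sin.comp hmc).tendsto T).mono_left
        (nhdsWithin_le_nhds (s := Set.Iio T))
      simpa [hcT, Function.comp_def] using this
    · filter_upwards [Ioo_mem_nhdsLT_of_mem (⟨hTpos, le_refl T⟩ : T ∈ Set.Ioc 0 T)] with a ha
      exact hsin_posT a ha
  have hinv : Tendsto (fun a => (Real.sin (c * (2 * a)))⁻¹) (nhdsWithin T (Set.Iio T)) atTop :=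
    hsinT.inv_tendsto_nhdsGT_zero
  have hnum : Tendsto (fun a => (1/2) * (c * Real.cos (c * (2 * a))))
      (nhdsWithin T (Set.Iio T)) (nhds ((1/2) * (c * (-1)))) := by
    have hmc : Continuous (fun a : ℝ => c * (2 * a)) :=
      continuous_const.mul (continuous_const.mul continuous_id)
    have hcc : Continuous (fun a : ℝ => (1/2) * (c * Real.cos (c * (2 * a)))) :=
      continuous_const.mul (continuous_const.mul (Real.continuous_cos.comp hmc))
    have := (hcc.tendsto T).mono_left (nhdsWithin_le_nhds (s := Set.Iio T))
    simpa [hcT] using this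
  have hg_bot : Tendsto g (nhdsWithin T (Set.Iio T)) atBot := by
    have := hnum.neg_mul_atTop (by nlinarith : (1/2) * (c * (-1)) < 0) hinv
    apply this.congr
    intro a
    simp only [hg, div_eq_mul_inv]
    ring
  have E2 : ∀ᶠ a in nhdsWithin T (Set.Iio T), g a ≤ f T - 1 :=
    hg_bot.eventually (eventually_le_atBot (f T - 1))
  have E3 : ∀ᶠ a in nhdsWithin T (Set.Iio T), f T - 1 < f a :=
    (hcontf.tendsto.mono_left nhdsWithin_le_nhds).eventually
      (eventually_gt_nhds (by linarith : f T - 1 < f T))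
  have E1 : ∀ᶠ a in nhdsWithin T (Set.Iio T), a ∈ Set.Ioo (0:ℝ) T :=
    eventually_mem_nhdsWithin.mono (fun a ha => ha) |>.and
      (Ioo_mem_nhdsLT_of_mem (⟨hTpos, le_refl T⟩ : T ∈ Set.Ioc 0 T)) |>.mono
      (fun a ha => ha.2)
  obtain ⟨a, ha1, ha2, ha3⟩ := (E1.and (E2.and E3)).exists
  have hfa : f a ≤ g a := key a (by rw [hbT]; exact ha1)
  linarith [hfa, ha2, ha3]

/-- **Riccati comparison lemma.** If `f : (0, r₀) → ℝ` is differentiable with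
`4f(t)² + f'(t) ≤ -λ` on `(0, r₀)` and `t·f(t) → 1/4` as `t → 0⁺`, then
`f(t) ≤ ½·ct_λ(2t)` on `(0, r₀)`. -/
theorem riccati_comparison (lam r₀ : ℝ) (hr₀ : 0 < r₀) (f : ℝ → ℝ)
    (hdiff : ∀ t ∈ Set.Ioo (0 : ℝ) r₀, DifferentiableAt ℝ f t)
    (hriccati : ∀ t ∈ Set.Ioo (0 : ℝ) r₀, 4 * (f t) ^ 2 + deriv f t ≤ -lam)
    (hasymp : Filter.Tendsto (fun t => t * f t) (nhdsWithin 0 (Set.Ioi 0))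
      (nhds (1 / 4))) :
    ∀ t ∈ Set.Ioo (0 : ℝ) r₀, f t ≤ (1 / 2) * ctGen lam (2 * t) := by
  rcases lt_trichotomy lam 0 with h | h | h
  · exact case_neg lam r₀ h hr₀ f hdiff hriccati hasymp
  · subst h
    exact case_zero r₀ hr₀ f hdiff hriccati hasymp
  · exact case_pos lam r₀ h hr₀ f hdiff hriccati hasymp
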